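/- For every odd integer m ≥ 3 and every odd positive integer t, the complete graph K_{4mt} minus a perfect matching decomposes into (mt−1)/2 edge-disjoint spanning subgraphs each isomorphic to t vertex-disjoint copies of C_m[4], together with one spanning subgraph consisting of mt vertex-disjoint 4-cycles. Equivalently, K_{4mt} − I ≅ (mt−1)/2 · (t·C_m[4]) ⊕ mt·C_4, provided K_{mt} has a C_m-factorization. -/

import Mathlib

open SimpleGraph

/-- `F` is a decomposition of the graph `G` into edge-disjoint subgraphs. -/
def IsDecompositionF {V : Type*} {n : ℕ} (G : SimpleGraph V) (F : Fin n → SimpleGraph V) : Prop :=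
  (∀ i, F i ≤ G) ∧ (∀ i j, i ≠ j → F i ⊓ F j = ⊥) ∧ (⨆ i, F i) = G

/-- `H` is a `C_k`-factor of `G`: a spanning 2-regular subgraph all of whose
connected components have `k` vertices (hence are `k`-cycles). -/
def IsCnFactor {V : Type*} (G H : SimpleGraph V) (k : ℕ) : Prop :=
  H ≤ G ∧ (∀ v, (H.neighborSet v).ncard = 2) ∧
    ∀ v, (H.connectedComponentMk v).supp.ncard = k

/-- `H` is a perfect matching (1-factor) of `G`. -/
def IsPM {V : Type*} (G H : SimpleGraph V) : Prop :=
  H ≤ G ∧ ∀ v, (H.neighborSet v).ncard = 1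

/-- The lexicographic blow-up `C_m[4]`: the Cayley graph on `ZMod 4 × ZMod m`
with connection set `ZMod 4 × {1, -1}`. -/
def Cm4 (m : ℕ) : SimpleGraph (ZMod 4 × ZMod m) :=
  SimpleGraph.fromRel (fun u v => v.2 - u.2 = 1)

/-- The blow-up `G[k]`: replace every vertex by `k` independent vertices. -/
def blowup {V : Type*} (G : SimpleGraph V) (k : ℕ) : SimpleGraph (V × Fin k) where
  Adj u v := G.Adj u.1 v.1
  symm := ⟨fun _ _ h => G.symm.symm _ _ h⟩
  loopless := ⟨fun u h => G.loopless.irrefl u.1 h⟩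

/-- `t` vertex-disjoint copies of a graph `G`. -/
def copies {V : Type*} (t : ℕ) (G : SimpleGraph V) : SimpleGraph (Fin t × V) where
  Adj u v := u.1 = v.1 ∧ G.Adj u.2 v.2
  symm := ⟨fun _ _ h => ⟨h.1.symm, G.symm.symm _ _ h.2⟩⟩
  loopless := ⟨fun u h => G.loopless.irrefl u.2 h.2⟩


/- ### Auxiliary machinery ### -/

variable {V : Type*}

open Classical in
/-- The neighbor of `c` other than `p` in a 2-regular graph. -/
noncomputable def nxt (H : SimpleGraph V) (p c : V) : V :=
  if h : ∃ w, H.neighborSet c \ {p} = {w} then h.choose else c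

lemma nxt_spec {H : SimpleGraph V} [Finite V] (hreg : ∀ v, (H.neighborSet v).ncard = 2)
    {p c : V} (h : H.Adj c p) :
    H.neighborSet c \ {p} = {nxt H p c} := by
  classical
  have hp : p ∈ H.neighborSet c := (H.mem_neighborSet c p).mpr h
  have h1 : (H.neighborSet c \ {p}).ncard = 1 := by
    rw [Set.ncard_diff_singleton_of_mem hp, hreg]
  obtain ⟨w, hw⟩ := Set.ncard_eq_one.mp h1
  have hex : ∃ w, H.neighborSet c \ {p} = {w} := ⟨w, hw⟩
  rw [nxt, dif_pos hex]
  exact hex.choose_spec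

lemma nxt_mem {H : SimpleGraph V} [Finite V] (hreg : ∀ v, (H.neighborSet v).ncard = 2)
    {p c : V} (h : H.Adj c p) :
    nxt H p c ∈ H.neighborSet c ∧ nxt H p c ≠ p := by
  have h1 := nxt_spec hreg h
  have h2 : nxt H p c ∈ H.neighborSet c \ {p} := by rw [h1]; exact rfl
  exact ⟨h2.1, h2.2⟩

lemma nbr_eq_pair {H : SimpleGraph V} [Finite V] (hreg : ∀ v, (H.neighborSet v).ncard = 2)
    {p c : V} (h : H.Adj c p) :
    H.neighborSet c = {p, nxt H p c} := by
  have hp : p ∈ H.neighborSet c := (H.mem_neighborSet c p).mpr h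
  have h1 : H.neighborSet c \ {p} = {nxt H p c} := nxt_spec hreg h
  have h2 : insert p (H.neighborSet c \ {p}) = H.neighborSet c :=
    Set.insert_diff_singleton.trans (Set.insert_eq_self.mpr hp)
  rw [← h2, h1]

lemma nxt_nxt {H : SimpleGraph V} [Finite V] (hreg : ∀ v, (H.neighborSet v).ncard = 2)
    {p c : V} (h : H.Adj c p) :
    nxt H (nxt H p c) c = p := by
  set q := nxt H p c with hq
  have hmem := nxt_mem hreg h
  have hadjq : H.Adj c q := hmem.1
  have hnbr : H.neighborSet c = {p, q} := nbr_eq_pair hreg h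
  have h2 : H.neighborSet c \ {q} = {nxt H q c} := nxt_spec hreg hadjq
  have h3 : H.neighborSet c \ {q} = {p} := by
    rw [hnbr]
    ext z
    simp only [Set.mem_diff, Set.mem_insert_iff, Set.mem_singleton_iff]
    constructor
    · rintro ⟨hz1 | hz1, hz2⟩ <;> tauto
    · rintro rfl
      exact ⟨Or.inl rfl, fun hpq => hmem.2 hpq.symm⟩
  rw [h3] at h2
  exact (Set.singleton_eq_singleton_iff.mp h2).symm

/-- Adjacent pairs of a graph. -/
def PairsAdj (H : SimpleGraph V) := {q : V × V // H.Adj q.1 q.2}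

instance [Finite V] {H : SimpleGraph V} : Finite (PairsAdj H) := by
  unfold PairsAdj; infer_instance

noncomputable def stepF (H : SimpleGraph V) [Finite V]
    (hreg : ∀ v, (H.neighborSet v).ncard = 2) : PairsAdj H → PairsAdj H :=
  fun q => ⟨(q.1.2, nxt H q.1.1 q.1.2), (nxt_mem hreg q.2.symm).1⟩

lemma stepF_inj {H : SimpleGraph V} [Finite V] (hreg : ∀ v, (H.neighborSet v).ncard = 2) :
    Function.Injective (stepF H hreg) := by
  have hleft : Function.LeftInverse
      (fun q : PairsAdj H => (⟨(nxt H q.1.2 q.1.1, q.1.1),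
        ((nxt_mem hreg q.2).1 : H.Adj q.1.1 _).symm⟩ : PairsAdj H)) (stepF H hreg) := by
    intro q
    apply Subtype.ext
    apply Prod.ext
    · exact nxt_nxt hreg q.2.symm
    · rfl
  exact hleft.injective

lemma exists_period {H : SimpleGraph V} [Finite V]
    (hreg : ∀ v, (H.neighborSet v).ncard = 2) (s0 : PairsAdj H) :
    ∃ n, 0 < n ∧ (stepF H hreg)^[n] s0 = s0 := by
  obtain ⟨a, b, hab, he⟩ := Finite.exists_ne_map_eq_of_infinite
    (fun k : ℕ => (stepF H hreg)^[k] s0)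
  rcases Nat.lt_or_ge a b with h | h
  · refine ⟨b - a, by omega, ?_⟩
    apply (stepF_inj hreg).iterate a
    rw [← Function.iterate_add_apply, Nat.add_sub_cancel' (le_of_lt h)]
    exact he.symm
  · have hba : b < a := by omega
    refine ⟨a - b, by omega, ?_⟩
    apply (stepF_inj hreg).iterate b
    rw [← Function.iterate_add_apply, Nat.add_sub_cancel' (le_of_lt hba)]
    exact he

lemma cycle_struct [Finite V] {H : SimpleGraph V} (hreg : ∀ v, (H.neighborSet v).ncard = 2)
    {m : ℕ} (hm : 3 ≤ m) (v0 : V)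
    (hsupp : (H.connectedComponentMk v0).supp.ncard = m) :
    ∃ g : ZMod m → V, Function.Injective g ∧
      Set.range g = (H.connectedComponentMk v0).supp ∧
      ∀ i j, H.Adj (g i) (g j) ↔ (j - i = 1 ∨ i - j = 1) := by
  classical
  -- pick a starting edge
  have hnon : (H.neighborSet v0).Nonempty := by
    apply Set.nonempty_of_ncard_ne_zero; rw [hreg]; omega
  obtain ⟨v1, hv1⟩ := hnon
  set f : PairsAdj H → PairsAdj H := stepF H hreg with hf
  set s0 : PairsAdj H := ⟨(v0, v1), hv1⟩ with hs0
  have hex := exists_period hreg s0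
  set p : ℕ := Nat.find hex with hpdef
  obtain ⟨hp0, hpfix⟩ : 0 < p ∧ f^[p] s0 = s0 := Nat.find_spec hex
  set x : ℕ → V := fun k => ((f^[k]) s0).1.1 with hx
  have hx0 : x 0 = v0 := rfl
  have hx2 : ∀ k, (f^[k] s0).1.2 = x (k + 1) := by
    intro k
    show _ = ((f^[k+1]) s0).1.1
    rw [Function.iterate_succ_apply']
    rfl
  have hadj : ∀ k, H.Adj (x k) (x (k + 1)) := by
    intro k; rw [← hx2]; exact (f^[k] s0).2
  have hnxtx : ∀ k, x (k + 2) = nxt H (x k) (x (k + 1)) := by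
    intro k
    have h1 : x (k + 2) = (f^[k+1] s0).1.2 := (hx2 (k+1)).symm
    rw [h1, Function.iterate_succ_apply']
    show nxt H (f^[k] s0).1.1 (f^[k] s0).1.2 = _
    rw [hx2]
  have hne2 : ∀ k, x (k + 2) ≠ x k := by
    intro k; rw [hnxtx k]; exact (nxt_mem hreg (hadj k).symm).2
  have hnbhd : ∀ k, H.neighborSet (x (k + 1)) = {x k, x (k + 2)} := by
    intro k; rw [hnxtx k]; exact nbr_eq_pair hreg (hadj k).symm
  have hper : ∀ k, x (k + p) = x k := by
    intro k
    show ((f^[k + p]) s0).1.1 = _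
    rw [Function.iterate_add_apply, hpfix]
  have hmulper : ∀ j k, x (k + j * p) = x k := by
    intro j
    induction j with
    | zero => intro k; simp
    | succ n ih =>
      intro k
      have : k + (n + 1) * p = (k + n * p) + p := by ring
      rw [this, hper, ih]
  have hmod : ∀ k, x k = x (k % p) := by
    intro k
    conv_lhs => rw [← Nat.mod_add_div' k p]
    rw [hmulper (k / p) (k % p)]
  have hpair_inj : ∀ k l, k < p → l < p → f^[k] s0 = f^[l] s0 → k = l := by
    have aux : ∀ k l, k ≤ l → l < p → f^[k] s0 = f^[l] s0 → k = l := by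
      intro k l hkl hl he
      by_contra hne
      have hlk : 0 < l - k := by omega
      have h1 : f^[k] (f^[l - k] s0) = f^[k] s0 := by
        rw [← Function.iterate_add_apply, Nat.add_sub_cancel' hkl]
        exact he.symm
      have h2 : f^[l - k] s0 = s0 := (stepF_inj hreg).iterate k h1
      have h3 : ¬ (0 < l - k ∧ f^[l-k] s0 = s0) := Nat.find_min hex (by omega)
      exact h3 ⟨hlk, h2⟩
    intro k l hk hl he
    rcases le_or_gt k l with h | h
    · exact aux k l h hl he
    · exact (aux l k (le_of_lt h) hk he.symm).symm
  -- injectivity of x on [0, p)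
  have hxinj : Set.InjOn x (Set.Iio p) := by
    by_contra hcon
    have hbad : ∃ l, l < p ∧ ∃ k, k < l ∧ x k = x l := by
      rw [Set.InjOn] at hcon
      push_neg at hcon
      obtain ⟨a, ha, b, hb, he, hne⟩ := hcon
      rcases Nat.lt_or_ge a b with h | h
      · exact ⟨b, hb, a, h, he⟩
      · exact ⟨a, ha, b, by omega, he.symm⟩
    set l := Nat.find hbad with hldef
    obtain ⟨hlp, k, hkl, hxkl⟩ : l < p ∧ ∃ k, k < l ∧ x k = x l := Nat.find_spec hbad
    have hmin' : ∀ j kk, j < l → kk < j → x kk = x j → False := by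
      intro j kk hj hkj he
      exact Nat.find_min hbad hj ⟨by omega, kk, hkj, he⟩
    have hlne : l ≠ k + 1 := by
      intro h
      rw [h] at hxkl
      exact (hadj k).ne hxkl
    have hl1 : 1 ≤ l := by omega
    have hnbl : H.neighborSet (x l) = {x (l - 1), x (l + 1)} := by
      have := hnbhd (l - 1)
      have e1 : l - 1 + 1 = l := by omega
      have e2 : l - 1 + 2 = l + 1 := by omega
      rwa [e1, e2] at this
    rcases Nat.eq_zero_or_pos k with hk0 | hk1
    · -- k = 0
      subst hk0
      have hl2 : 2 ≤ l := by omega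
      have hxp : x p = x 0 := by have := hper 0; simpa using this
      have hnb0 : H.neighborSet (x p) = {x (p - 1), x (p + 1)} := by
        have := hnbhd (p - 1)
        have e1 : p - 1 + 1 = p := by omega
        have e2 : p - 1 + 2 = p + 1 := by omega
        rwa [e1, e2] at this
      have hxp1 : x (p + 1) = x 1 := by have := hper 1; rwa [Nat.add_comm] at this
      have hmem : x (l - 1) ∈ ({x (p - 1), x (p + 1)} : Set V) := by
        rw [← hnb0, hxp, hxkl, hnbl]; left; rfl
      rw [hxp1] at hmem
      rcases hmem with hmem | hmem
      · -- x (l-1) = x (p-1) : pairs coincide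
        have hpair : f^[l-1] s0 = f^[p-1] s0 := by
          apply Subtype.ext
          apply Prod.ext
          · exact hmem
          · show (f^[l-1] s0).1.2 = (f^[p-1] s0).1.2
            rw [hx2, hx2]
            have e1 : l - 1 + 1 = l := by omega
            have e2 : p - 1 + 1 = p := by omega
            rw [e1, e2, hxp, ← hxkl]
        have := hpair_inj (l-1) (p-1) (by omega) (by omega) hpair
        omega
      · -- x (l-1) = x 1
        rcases Nat.lt_trichotomy 1 (l - 1) with h | h | h
        · exact hmin' (l-1) 1 (by omega) h hmem.symm
        · have h2 : l = 2 := by omega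
          rw [h2] at hxkl
          exact hne2 0 hxkl.symm
        · omega
    · -- k ≥ 1
      have hnbk : H.neighborSet (x k) = {x (k - 1), x (k + 1)} := by
        have := hnbhd (k - 1)
        have e1 : k - 1 + 1 = k := by omega
        have e2 : k - 1 + 2 = k + 1 := by omega
        rwa [e1, e2] at this
      have hmem : x (l - 1) ∈ H.neighborSet (x k) := by
        rw [hxkl, hnbl]; left; rfl
      rw [hnbk] at hmem
      rcases hmem with hmem | hmem
      · -- x (l-1) = x (k-1)
        exact hmin' (l-1) (k-1) (by omega) (by omega) hmem.symm
      · -- x (l-1) = x (k+1)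
        rcases Nat.lt_trichotomy (k+1) (l-1) with h | h | h
        · exact hmin' (l-1) (k+1) (by omega) h hmem.symm
        · have h2 : l = k + 2 := by omega
          rw [h2] at hxkl
          exact hne2 k hxkl.symm
        · omega
  -- range and support
  have hclos : ∀ v w, v ∈ Set.range x → H.Adj v w → w ∈ Set.range x := by
    rintro _ w ⟨j, rfl⟩ hvw
    have h1 : H.neighborSet (x (j + p)) = {x (j + p - 1), x (j + p + 1)} := by
      have := hnbhd (j + p - 1)
      have e1 : j + p - 1 + 1 = j + p := by omega
      have e2 : j + p - 1 + 2 = j + p + 1 := by omega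
      rwa [e1, e2] at this
    have h2 : w ∈ H.neighborSet (x (j + p)) := by
      rw [hper j]; exact hvw
    rw [h1] at h2
    rcases h2 with h2 | h2
    · exact ⟨j + p - 1, h2.symm⟩
    · exact ⟨j + p + 1, h2.symm⟩
  have hsupp_eq : (H.connectedComponentMk v0).supp = Set.range x := by
    have hwalk : ∀ (a b : V) (_ : H.Walk a b), a ∈ Set.range x → b ∈ Set.range x := by
      intro a b w
      induction w with
      | nil => exact id
      | cons h q ih => intro ha; exact ih (hclos _ _ ha h)
    ext v
    rw [ConnectedComponent.mem_supp_iff, ConnectedComponent.eq]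
    constructor
    · intro hr
      obtain ⟨w⟩ := hr.symm
      exact hwalk v0 v w ⟨0, hx0⟩
    · rintro ⟨k, rfl⟩
      have hreach : ∀ k, H.Reachable v0 (x k) := by
        intro k
        induction k with
        | zero => rw [hx0]
        | succ n ih => exact ih.trans (hadj n).reachable
      exact (hreach k).symm
  have hpm : p = m := by
    have h1 : (Set.range x) = x '' Set.Iio p := by
      apply Set.Subset.antisymm
      · rintro _ ⟨k, rfl⟩
        exact ⟨k % p, Nat.mod_lt _ hp0, (hmod k).symm⟩
      · exact Set.image_subset_range _ _
    have h2 : (Set.range x).ncard = p := by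
      rw [h1, Set.ncard_image_of_injOn hxinj, ← Finset.coe_range,
        Set.ncard_coe_finset, Finset.card_range]
    rw [hsupp_eq, h2] at hsupp
    exact hsupp
  subst hpm
  haveI : NeZero p := ⟨by omega⟩
  refine ⟨fun i => x i.val, ?_, ?_, ?_⟩
  · intro i j hij
    have := hxinj (Set.mem_Iio.mpr (ZMod.val_lt i)) (Set.mem_Iio.mpr (ZMod.val_lt j)) hij
    exact ZMod.val_injective p this
  · rw [hsupp_eq]
    apply Set.Subset.antisymm
    · rintro _ ⟨i, rfl⟩; exact ⟨i.val, rfl⟩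
    · rintro _ ⟨k, rfl⟩
      refine ⟨(k : ZMod p), ?_⟩
      show x ((k : ZMod p)).val = x k
      rw [ZMod.val_natCast]; exact (hmod k).symm
  · -- adjacency characterization
    have hcast : ∀ i : ZMod p, ((i.val : ℕ) : ZMod p) = i := fun i =>
      ZMod.natCast_rightInverse i
    have hgnat : ∀ k : ℕ, x ((k : ZMod p)).val = x k := by
      intro k; rw [ZMod.val_natCast]; exact (hmod k).symm
    have hg1 : ∀ i : ZMod p, x ((i + 1 : ZMod p)).val = x (i.val + 1) := by
      intro i
      have : (i + 1 : ZMod p) = ((i.val + 1 : ℕ) : ZMod p) := by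
        push_cast [hcast]; ring
      rw [this, hgnat]
    have hg_1 : ∀ i : ZMod p, x ((i - 1 : ZMod p)).val = x (i.val + (p - 1)) := by
      intro i
      have : (i - 1 : ZMod p) = ((i.val + (p - 1) : ℕ) : ZMod p) := by
        have h1 : ((p - 1 : ℕ) : ZMod p) = (p : ZMod p) - 1 := by
          rw [Nat.cast_sub (by omega)]; norm_num
        rw [Nat.cast_add, h1, ZMod.natCast_self, hcast]; ring
      rw [this, hgnat]
    have hnbrg : ∀ i : ZMod p,
        H.neighborSet (x i.val) = {x ((i - 1 : ZMod p)).val, x ((i + 1 : ZMod p)).val} := by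
      intro i
      have e0 : x i.val = x (i.val + (p - 1) + 1) := by
        have e : i.val + (p - 1) + 1 = i.val + p := by omega
        rw [e, hper]
      have := hnbhd (i.val + (p - 1))
      rw [← e0] at this
      rw [this, hg_1, hg1]
      congr 2
      have e : i.val + (p - 1) + 2 = (i.val + 1) + p := by omega
      rw [e, hper]
    have hinj' : ∀ i j : ZMod p, x i.val = x j.val → i = j := by
      intro i j hij
      exact ZMod.val_injective p
        (hxinj (Set.mem_Iio.mpr (ZMod.val_lt i)) (Set.mem_Iio.mpr (ZMod.val_lt j)) hij)
    intro i j
    constructor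
    · intro h
      have hmem : x j.val ∈ H.neighborSet (x i.val) := h
      rw [hnbrg] at hmem
      rcases hmem with hmem | hmem
      · right
        have hji : j = i - 1 := hinj' _ _ hmem
        rw [hji]; ring
      · left
        have hji : j = i + 1 := hinj' _ _ hmem
        rw [hji]; ring
    · intro h
      rcases h with h | h
      · have hji : j = i + 1 := by
          have h2 := sub_eq_iff_eq_add.mp h; rw [h2]; ring
        show H.Adj (x i.val) (x j.val)
        rw [hji, hg1]
        exact hadj i.val
      · have hij : i = j + 1 := by
          have h2 := sub_eq_iff_eq_add.mp h; rw [h2]; ring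
        show H.Adj (x i.val) (x j.val)
        rw [hij, hg1]
        exact (hadj j.val).symm

lemma struct_equiv {n m t : ℕ} (hm : 3 ≤ m) (hn : n = m * t)
    {H : SimpleGraph (Fin n)}
    (hreg : ∀ v, (H.neighborSet v).ncard = 2)
    (hcomp : ∀ v, (H.connectedComponentMk v).supp.ncard = m) :
    ∃ ψ : (Fin t × ZMod m) ≃ Fin n,
      ∀ a b, H.Adj (ψ a) (ψ b) ↔ a.1 = b.1 ∧ (b.2 - a.2 = 1 ∨ a.2 - b.2 = 1) := by
  classical
  haveI : Fintype H.ConnectedComponent := Fintype.ofFinite _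
  have hfilter : ∀ c : H.ConnectedComponent,
      (Finset.univ.filter (fun v => H.connectedComponentMk v = c)).card = c.supp.ncard := by
    intro c
    rw [Set.ncard_eq_toFinset_card']
    congr 1
    ext v
    simp [ConnectedComponent.mem_supp_iff]
  have hcount : n = Fintype.card H.ConnectedComponent * m := by
    have h1 : (Finset.univ : Finset (Fin n)).card =
        ∑ c : H.ConnectedComponent, (Finset.univ.filter
          (fun v => H.connectedComponentMk v = c)).card :=
      Finset.card_eq_sum_card_fiberwise (fun x _ => Finset.mem_univ _)
    rw [Finset.card_univ, Fintype.card_fin] at h1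
    have h2 : ∑ c : H.ConnectedComponent, (Finset.univ.filter
        (fun v => H.connectedComponentMk v = c)).card = ∑ _c : H.ConnectedComponent, m :=
      Finset.sum_congr rfl (fun c _ => by
        rw [hfilter c]
        obtain ⟨v, hv⟩ := Quot.exists_rep c
        rw [← hv]
        exact hcomp v)
    rw [h2, Finset.sum_const, smul_eq_mul, Finset.card_univ] at h1
    exact h1
  have hcardC : Fintype.card H.ConnectedComponent = t := by
    have hm0 : 0 < m := by omega
    have : m * t = Fintype.card H.ConnectedComponent * m := by rw [← hn]; exact hcount
    nlinarith [this]
  have e : Fin t ≃ H.ConnectedComponent :=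
    Fintype.equivOfCardEq (by rw [Fintype.card_fin, hcardC])
  set rep : H.ConnectedComponent → Fin n := fun c => (Quot.exists_rep c).choose with hrepdef
  have hrep : ∀ c, H.connectedComponentMk (rep c) = c := fun c =>
    (Quot.exists_rep c).choose_spec
  choose g hg1 hg2 hg3 using fun c : H.ConnectedComponent =>
    cycle_struct hreg hm (rep c) (hcomp (rep c))
  have hgc : ∀ c i, H.connectedComponentMk (g c i) = c := by
    intro c i
    have h1 : g c i ∈ Set.range (g c) := Set.mem_range_self i
    rw [hg2 c] at h1
    rw [ConnectedComponent.mem_supp_iff] at h1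
    rw [h1, hrep]
  set Ψ : Fin t × ZMod m → Fin n := fun a => g (e a.1) a.2 with hΨ
  have hinj : Function.Injective Ψ := by
    intro a b hab
    have hc : e a.1 = e b.1 := by
      rw [← hgc (e a.1) a.2, ← hgc (e b.1) b.2]
      exact congrArg _ hab
    have h1 : a.1 = b.1 := e.injective hc
    have h2 : a.2 = b.2 := by
      apply hg1 (e a.1)
      have hab' : g (e a.1) a.2 = g (e b.1) b.2 := hab
      rw [hab', ← hc]
    exact Prod.ext h1 h2
  have hsurj : Function.Surjective Ψ := by
    intro v
    set c := H.connectedComponentMk v with hc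
    have h1 : v ∈ Set.range (g c) := by
      rw [hg2 c, ConnectedComponent.mem_supp_iff, hrep]
    obtain ⟨i, hi⟩ := h1
    refine ⟨(e.symm c, i), ?_⟩
    show g (e (e.symm c)) i = v
    rw [e.apply_symm_apply]
    exact hi
  refine ⟨Equiv.ofBijective Ψ ⟨hinj, hsurj⟩, ?_⟩
  intro a b
  show H.Adj (Ψ a) (Ψ b) ↔ _
  constructor
  · intro h
    have hc : e a.1 = e b.1 := by
      rw [← hgc (e a.1) a.2, ← hgc (e b.1) b.2]
      exact ConnectedComponent.sound h.reachable
    have h1 : a.1 = b.1 := e.injective hc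
    refine ⟨h1, ?_⟩
    have h2 : H.Adj (g (e a.1) a.2) (g (e a.1) b.2) := by
      have : Ψ b = g (e a.1) b.2 := by show g (e b.1) b.2 = _; rw [← hc]
      rw [← this]
      exact h
    exact (hg3 (e a.1) a.2 b.2).mp h2
  · rintro ⟨h1, h2⟩
    show H.Adj (g (e a.1) a.2) (g (e b.1) b.2)
    rw [← h1]
    exact (hg3 (e a.1) a.2 b.2).mpr h2

section Wlevel

variable {N : ℕ}

/-- The within-group perfect matching on `ZMod 4 × Fin N`. -/
def Imatch (N : ℕ) : SimpleGraph (ZMod 4 × Fin N) where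
  Adj u v := u.2 = v.2 ∧ v.1 = u.1 + 2
  symm := by
    refine ⟨?_⟩
    rintro ⟨a, x⟩ ⟨b, y⟩ ⟨h1, h2⟩
    exact ⟨h1.symm, by subst h2; exact (by decide : ∀ a : ZMod 4, a = a + 2 + 2) a⟩
  loopless := by
    refine ⟨?_⟩
    rintro ⟨a, x⟩ ⟨_, h⟩
    exact (by decide : ∀ a : ZMod 4, ¬ a = a + 2) a h

/-- The within-group `C_4`-factor on `ZMod 4 × Fin N`. -/
def C4F (N : ℕ) : SimpleGraph (ZMod 4 × Fin N) where
  Adj u v := u.2 = v.2 ∧ (v.1 = u.1 + 1 ∨ u.1 = v.1 + 1)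
  symm := by
    refine ⟨?_⟩
    rintro ⟨a, x⟩ ⟨b, y⟩ ⟨h1, h2⟩
    exact ⟨h1.symm, h2.symm⟩
  loopless := by
    refine ⟨?_⟩
    rintro ⟨a, x⟩ ⟨_, h⟩
    rcases h with h | h <;> exact (by decide : ∀ a : ZMod 4, ¬ a = a + 1) a h

lemma Imatch_nbr (u : ZMod 4 × Fin N) :
    (Imatch N).neighborSet u = {(u.1 + 2, u.2)} := by
  ext ⟨b, y⟩
  simp only [mem_neighborSet, Set.mem_singleton_iff]
  constructor
  · rintro ⟨h1, h2⟩
    rw [Prod.ext_iff]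
    exact ⟨h2, h1.symm⟩
  · intro h
    rw [Prod.ext_iff] at h
    exact ⟨h.2.symm, h.1⟩

lemma C4F_nbr (u : ZMod 4 × Fin N) :
    (C4F N).neighborSet u = {(u.1 + 1, u.2), (u.1 + 3, u.2)} := by
  ext ⟨b, y⟩
  simp only [mem_neighborSet, Set.mem_insert_iff, Set.mem_singleton_iff, Prod.ext_iff]
  constructor
  · rintro ⟨h1, h2 | h2⟩
    · exact Or.inl ⟨h2, h1.symm⟩
    · refine Or.inr ⟨?_, h1.symm⟩
      revert h2
      exact (by decide : ∀ a b : ZMod 4, a = b + 1 → b = a + 3) u.1 b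
  · rintro (⟨h1, h2⟩ | ⟨h1, h2⟩)
    · exact ⟨h2.symm, Or.inl h1⟩
    · refine ⟨h2.symm, Or.inr ?_⟩
      revert h1
      exact (by decide : ∀ a b : ZMod 4, b = a + 3 → a = b + 1) u.1 b

lemma C4F_reach (a b : ZMod 4) (v : Fin N) : (C4F N).Reachable (a, v) (b, v) := by
  have hstep : ∀ c : ZMod 4, (C4F N).Reachable (c, v) (c + 1, v) :=
    fun c => (Adj.reachable ⟨rfl, Or.inl rfl⟩)
  have hcases : b = a ∨ b = a + 1 ∨ b = a + 1 + 1 ∨ b = a + 1 + 1 + 1 :=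
    (by decide : ∀ a b : ZMod 4, b = a ∨ b = a + 1 ∨ b = a + 1 + 1 ∨ b = a + 1 + 1 + 1) a b
  rcases hcases with h | h | h | h <;> subst h
  · rfl
  · exact hstep a
  · exact (hstep a).trans (hstep (a + 1))
  · exact ((hstep a).trans (hstep (a + 1))).trans (hstep (a + 1 + 1))

lemma C4F_reach_snd {u w : ZMod 4 × Fin N} (h : (C4F N).Reachable u w) : u.2 = w.2 := by
  obtain ⟨p⟩ := h
  induction p with
  | nil => rfl
  | cons h q ih => exact h.1.trans ih

lemma C4F_supp (u : ZMod 4 × Fin N) :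
    ((C4F N).connectedComponentMk u).supp = {w | w.2 = u.2} := by
  ext w
  rw [ConnectedComponent.mem_supp_iff, ConnectedComponent.eq]
  constructor
  · intro h
    exact C4F_reach_snd h
  · intro h
    have : w = (w.1, u.2) := by rw [← h]
    rw [this]
    exact C4F_reach w.1 u.1 u.2

lemma C4F_supp_ncard (u : ZMod 4 × Fin N) :
    ((C4F N).connectedComponentMk u).supp.ncard = 4 := by
  rw [C4F_supp]
  have h1 : {w : ZMod 4 × Fin N | w.2 = u.2} = Set.range (fun b : ZMod 4 => (b, u.2)) := by
    ext ⟨b, y⟩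
    simp only [Set.mem_setOf_eq, Set.mem_range, Prod.ext_iff]
    constructor
    · intro h; exact ⟨b, rfl, h.symm⟩
    · rintro ⟨c, rfl, h⟩; exact h.symm
  rw [h1, ← Set.image_univ,
    Set.ncard_image_of_injective _ (fun a b h => (Prod.ext_iff.mp h).1),
    Set.ncard_univ, Nat.card_eq_fintype_card]
  rfl

end Wlevel

section Transfer

variable {α β : Type*}

lemma comap_nbr_ncard (e : α ≃ β) (G : SimpleGraph β) (v : α) :
    ((G.comap e).neighborSet v).ncard = (G.neighborSet (e v)).ncard := by
  have h1 : (G.comap e).neighborSet v = e.symm '' (G.neighborSet (e v)) := by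
    ext w
    simp only [mem_neighborSet, comap_adj, Set.mem_image]
    constructor
    · intro h; exact ⟨e w, h, e.symm_apply_apply w⟩
    · rintro ⟨z, hz, rfl⟩; rwa [e.apply_symm_apply]
  rw [h1, Set.ncard_image_of_injective _ e.symm.injective]

lemma comap_supp_ncard (e : α ≃ β) (G : SimpleGraph β) (v : α) :
    (((G.comap e).connectedComponentMk v).supp).ncard
      = ((G.connectedComponentMk (e v)).supp).ncard := by
  let hto : (G.comap e) →g G := ⟨e, fun h => h⟩
  let hfrom : G →g (G.comap e) := ⟨e.symm, fun {a b} h => by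
    show G.Adj (e (e.symm a)) (e (e.symm b))
    rwa [e.apply_symm_apply, e.apply_symm_apply]⟩
  have h1 : (G.connectedComponentMk (e v)).supp
      = e '' ((G.comap e).connectedComponentMk v).supp := by
    ext w
    rw [ConnectedComponent.mem_supp_iff, ConnectedComponent.eq]
    constructor
    · intro h
      refine ⟨e.symm w, ?_, e.apply_symm_apply w⟩
      rw [ConnectedComponent.mem_supp_iff, ConnectedComponent.eq]
      have h2 : (G.comap e).Reachable (e.symm w) (e.symm (e v)) := h.map hfrom
      rwa [e.symm_apply_apply] at h2
    · rintro ⟨z, hz, rfl⟩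
      rw [ConnectedComponent.mem_supp_iff, ConnectedComponent.eq] at hz
      exact (hz.map hto : G.Reachable (e z) (e v))
  rw [h1, Set.ncard_image_of_injective _ e.injective]

end Transfer

/-- For odd `m ≥ 3` and odd `t ≥ 1`, provided `K_{mt}` has a `C_m`-factorization,
`K_{4mt}` minus a perfect matching decomposes into `(mt-1)/2` spanning subgraphs
each isomorphic to `t` disjoint copies of `C_m[4]`, together with one `C_4`-factor. -/
theorem stmt_11 (m t : ℕ) (hm : 3 ≤ m) (hmo : Odd m) (ht : 1 ≤ t) (hto : Odd t)
    (hKmt : ∃ F : Fin ((m * t - 1) / 2) → SimpleGraph (Fin (m * t)),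
      IsDecompositionF (⊤ : SimpleGraph (Fin (m * t))) F ∧
      ∀ i, IsCnFactor (⊤ : SimpleGraph (Fin (m * t))) (F i) m) :
    ∃ (I : SimpleGraph (Fin (4 * m * t)))
      (F : Fin ((m * t - 1) / 2 + 1) → SimpleGraph (Fin (4 * m * t))),
      IsPM (⊤ : SimpleGraph (Fin (4 * m * t))) I ∧
      IsDecompositionF ((⊤ : SimpleGraph (Fin (4 * m * t))) \ I) F ∧
      (∀ i : Fin ((m * t - 1) / 2 + 1), (i : ℕ) < (m * t - 1) / 2 →
        Nonempty (F i ≃g copies t (Cm4 m))) ∧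
      (∀ i : Fin ((m * t - 1) / 2 + 1), (i : ℕ) = (m * t - 1) / 2 →
        IsCnFactor ((⊤ : SimpleGraph (Fin (4 * m * t))) \ I) (F i) 4) := by
  classical
  haveI : Fact (1 < m) := ⟨by omega⟩
  have d1 : ∀ a b : ZMod 4, (b = a + 1 ∨ a = b + 1) → ¬ a = b := by decide
  have d2 : ∀ a b : ZMod 4, (b = a + 1 ∨ a = b + 1) → ¬ b = a + 2 := by decide
  have d3 : ∀ a b : ZMod 4, ¬ a = b → ¬ b = a + 2 → (b = a + 1 ∨ a = b + 1) := by decide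
  have d4 : ∀ a : ZMod 4, ¬ a + 1 = a + 3 := by decide
  set N := m * t with hN
  set k := (N - 1) / 2 with hk
  obtain ⟨F₀, ⟨hle0, hdisj0, hsup0⟩, hfac0⟩ := hKmt
  have e4 : Fin (4 * m * t) ≃ ZMod 4 × Fin N :=
    Fintype.equivOfCardEq (by
      rw [Fintype.card_fin, Fintype.card_prod, ZMod.card, Fintype.card_fin, hN]
      ring)
  set FW : Fin (k + 1) → SimpleGraph (ZMod 4 × Fin N) :=
    (fun j => if h : (j : ℕ) < k then (F₀ ⟨(j : ℕ), h⟩).comap Prod.snd else C4F N)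
    with hFWdef
  -- W-level facts
  have hWle : ∀ j, FW j ≤ (⊤ : SimpleGraph (ZMod 4 × Fin N)) \ Imatch N := by
    intro j u v huv
    rw [sdiff_adj, top_adj]
    simp only [hFWdef] at huv
    by_cases h : (j : ℕ) < k
    · rw [dif_pos h, comap_adj] at huv
      have hne : u.2 ≠ v.2 := huv.ne
      constructor
      · intro he; exact hne (congrArg Prod.snd he)
      · rintro ⟨h1, _⟩; exact hne h1
    · rw [dif_neg h] at huv
      obtain ⟨h1, h2⟩ : u.2 = v.2 ∧ (v.1 = u.1 + 1 ∨ u.1 = v.1 + 1) := huv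
      constructor
      · intro he; exact d1 u.1 v.1 h2 (congrArg Prod.fst he)
      · rintro ⟨_, h3⟩; exact d2 u.1 v.1 h2 h3
  have hWdisj : ∀ i j, i ≠ j → FW i ⊓ FW j = ⊥ := by
    intro i j hij
    ext u v
    simp only [inf_adj, bot_adj, iff_false, not_and]
    intro h1 h2
    simp only [hFWdef] at h1 h2
    by_cases hi : (i : ℕ) < k <;> by_cases hj : (j : ℕ) < k
    · rw [dif_pos hi, comap_adj] at h1
      rw [dif_pos hj, comap_adj] at h2
      have hne : (⟨(i : ℕ), hi⟩ : Fin k) ≠ ⟨(j : ℕ), hj⟩ := by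
        intro h
        have hval := congrArg (Fin.val (n := k)) h
        exact hij (Fin.ext hval)
      have hcommon : (F₀ ⟨(i : ℕ), hi⟩ ⊓ F₀ ⟨(j : ℕ), hj⟩).Adj u.2 v.2 := ⟨h1, h2⟩
      rw [hdisj0 _ _ hne] at hcommon
      exact hcommon
    · rw [dif_pos hi, comap_adj] at h1
      rw [dif_neg hj] at h2
      obtain ⟨h3, _⟩ : u.2 = v.2 ∧ _ := h2
      exact h1.ne h3
    · rw [dif_neg hi] at h1
      rw [dif_pos hj, comap_adj] at h2
      obtain ⟨h3, _⟩ : u.2 = v.2 ∧ _ := h1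
      exact h2.ne h3
    · exact hij (Fin.ext (by omega))
  have hWsup : (⨆ j, FW j) = (⊤ : SimpleGraph (ZMod 4 × Fin N)) \ Imatch N := by
    apply le_antisymm
    · exact iSup_le hWle
    · intro u v huv
      rw [sdiff_adj, top_adj] at huv
      obtain ⟨hne, hnI⟩ := huv
      rw [iSup_adj]
      by_cases hsnd : u.2 = v.2
      · refine ⟨⟨k, by omega⟩, ?_⟩
        simp only [hFWdef]
        rw [dif_neg (lt_irrefl k)]
        have hnfst : ¬ v.1 = u.1 + 2 := by
          intro h
          exact hnI ⟨hsnd, h⟩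
        have hfne : ¬ u.1 = v.1 := by
          intro h
          exact hne (Prod.ext h hsnd)
        exact ⟨hsnd, d3 u.1 v.1 hfne hnfst⟩
      · have htop : (⊤ : SimpleGraph (Fin N)).Adj u.2 v.2 := hsnd
        rw [← hsup0, iSup_adj] at htop
        obtain ⟨i', hi'⟩ := htop
        refine ⟨⟨i'.val, by omega⟩, ?_⟩
        simp only [hFWdef]
        rw [dif_pos (show ((⟨i'.val, by omega⟩ : Fin (k+1)) : ℕ) < k from i'.isLt)]
        rw [comap_adj]
        have heq : (⟨((⟨i'.val, by omega⟩ : Fin (k+1)) : ℕ), i'.isLt⟩ : Fin k) = i' :=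
          Fin.ext rfl
        rw [heq]
        exact hi'
  -- pass to Fin (4*m*t)
  have hTI : (⊤ : SimpleGraph (Fin (4 * m * t))) \ (Imatch N).comap e4
      = ((⊤ : SimpleGraph (ZMod 4 × Fin N)) \ Imatch N).comap e4 := by
    ext u v
    simp only [sdiff_adj, top_adj, comap_adj, ne_eq, EmbeddingLike.apply_eq_iff_eq]
  refine ⟨(Imatch N).comap e4, fun j => (FW j).comap e4, ⟨le_top, ?_⟩, ?_, ?_, ?_⟩
  · -- perfect matching
    intro v
    rw [comap_nbr_ncard, Imatch_nbr]
    exact Set.ncard_singleton _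
  · -- decomposition
    refine ⟨?_, ?_, ?_⟩
    · intro j
      rw [hTI]
      intro u v h
      exact hWle j h
    · intro i j hij
      ext u v
      simp only [inf_adj, bot_adj, iff_false, not_and, comap_adj]
      intro h1 h2
      have hcommon : (FW i ⊓ FW j).Adj (e4 u) (e4 v) := ⟨h1, h2⟩
      rw [hWdisj i j hij] at hcommon
      exact hcommon
    · rw [hTI]
      ext u v
      simp only [iSup_adj, comap_adj]
      rw [← hWsup, iSup_adj]
  · -- isomorphism with t copies of C_m[4]
    intro i hik
    obtain ⟨ψ, hψ⟩ := struct_equiv hm hN (hfac0 ⟨(i : ℕ), hik⟩).2.1 (hfac0 ⟨(i : ℕ), hik⟩).2.2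
    have hFWi : FW i = (F₀ ⟨(i : ℕ), hik⟩).comap Prod.snd := by
      simp only [hFWdef]
      rw [dif_pos hik]
    have hone : (1 : ZMod m) ≠ 0 := one_ne_zero
    refine ⟨RelIso.symm ⟨?_, ?_⟩⟩
    · exact
        { toFun := fun p => e4.symm (p.2.1, ψ (p.1, p.2.2))
          invFun := fun u => ((ψ.symm (e4 u).2).1, ((e4 u).1, (ψ.symm (e4 u).2).2))
          left_inv := by
            rintro ⟨i1, a, x⟩
            simp
          right_inv := by
            intro u
            simp }
    · intro p q
      show ((FW i).comap e4).Adj (e4.symm (p.2.1, ψ (p.1, p.2.2)))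
        (e4.symm (q.2.1, ψ (q.1, q.2.2))) ↔ (copies t (Cm4 m)).Adj p q
      rw [comap_adj, e4.apply_symm_apply, e4.apply_symm_apply, hFWi, comap_adj]
      show (F₀ _).Adj (ψ (p.1, p.2.2)) (ψ (q.1, q.2.2)) ↔ _
      rw [hψ (p.1, p.2.2) (q.1, q.2.2)]
      show _ ↔ p.1 = q.1 ∧ (Cm4 m).Adj p.2 q.2
      unfold Cm4
      rw [SimpleGraph.fromRel_adj]
      constructor
      · rintro ⟨h1, h2⟩
        refine ⟨h1, ?_, h2⟩
        intro he
        have hxy : p.2.2 = q.2.2 := congrArg Prod.snd he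
        rcases h2 with h2 | h2 <;> rw [hxy] at h2 <;> simp at h2 <;> exact hone h2
      · rintro ⟨h1, _, h2⟩
        exact ⟨h1, h2⟩
  · -- the C4 factor
    intro i hik
    have hFWi : FW i = C4F N := by
      simp only [hFWdef]
      rw [dif_neg (by omega)]
    refine ⟨?_, ?_, ?_⟩
    · rw [hTI]
      intro u v h
      exact hWle i h
    · intro v
      show (((FW i).comap e4).neighborSet v).ncard = 2
      rw [hFWi, comap_nbr_ncard, C4F_nbr]
      apply Set.ncard_pair
      intro h
      exact d4 (e4 v).1 (congrArg Prod.fst h)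
    · intro v
      show ((((FW i).comap e4).connectedComponentMk v).supp).ncard = 4
      rw [hFWi, comap_supp_ncard]
      exact C4F_supp_ncard (e4 v)
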